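/- Right invertibility is necessary for decoupling (Proposition 2.12). Let A ∈ ℝ^{n×n}, B ∈ ℝ^{n×m}, C ∈ ℝ^{p×n} with p ≤ m. If there exist F ∈ ℝ^{m×n}, G ∈ ℝ^{m×p}, and positive integers δ_1, …, δ_p such that over ℝ(s) the closed-loop transfer function C (sI − A − BF)⁻¹ B G equals diag(s^{−δ_1}, …, s^{−δ_p}), then the open-loop transfer function T(s) = C (sI − A)⁻¹ B, viewed as a p×m matrix over the field ℝ(s), has rank p (i.e. T(s) is right invertible over ℝ(s)). -/

import Mathlib

noncomputable section
open Matrix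

/-- Entrywise embedding of a real matrix into matrices over the field ℝ(s). -/
noncomputable def toRat {k l : ℕ} (M : Matrix (Fin k) (Fin l) ℝ) :
    Matrix (Fin k) (Fin l) (RatFunc ℝ) :=
  M.map (algebraMap ℝ (RatFunc ℝ))

/-- The matrix `s I - M` over ℝ(s). -/
noncomputable def sIm {k : ℕ} (M : Matrix (Fin k) (Fin k) ℝ) :
    Matrix (Fin k) (Fin k) (RatFunc ℝ) :=
  Matrix.scalar (Fin k) (RatFunc.X : RatFunc ℝ) - toRat M

lemma sIm_eq_charmatrix_map {k : ℕ} (M : Matrix (Fin k) (Fin k) ℝ) :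
    sIm M = (charmatrix M).map (algebraMap (Polynomial ℝ) (RatFunc ℝ)) := by
  ext i j
  by_cases h : i = j <;>
    simp [sIm, toRat, charmatrix, h, Matrix.scalar, diagonal, algebraMap_apply,
      RatFunc.algebraMap_X, Matrix.map_apply]

lemma isUnit_sIm {k : ℕ} (M : Matrix (Fin k) (Fin k) ℝ) : IsUnit (sIm M) := by
  rw [Matrix.isUnit_iff_isUnit_det, sIm_eq_charmatrix_map]
  have : (charmatrix M).map (algebraMap (Polynomial ℝ) (RatFunc ℝ)) =
      (algebraMap (Polynomial ℝ) (RatFunc ℝ)).mapMatrix (charmatrix M) := rfl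
  rw [this, ← RingHom.map_det, isUnit_iff_ne_zero]
  intro h
  have : (charmatrix M).det = 0 := by
    apply IsFractionRing.injective (Polynomial ℝ) (RatFunc ℝ)
    simpa using h
  exact (Matrix.charpoly_monic M).ne_zero this

/-- Right invertibility is necessary for decoupling (Proposition 2.12): if some
static state feedback `(F, G)` yields the diagonal closed loop
`diag (s^{-δ 1}, …, s^{-δ p})` with the `δ i` positive, then the open-loop
transfer function `C (sI - A)⁻¹ B` has rank `p` over ℝ(s). -/
theorem right_invertibility_necessary_for_decoupling
    (n m p : ℕ) (hpm : p ≤ m)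
    (A : Matrix (Fin n) (Fin n) ℝ) (B : Matrix (Fin n) (Fin m) ℝ)
    (C : Matrix (Fin p) (Fin n) ℝ)
    (F : Matrix (Fin m) (Fin n) ℝ) (G : Matrix (Fin m) (Fin p) ℝ)
    (δ : Fin p → ℕ) (hδ : ∀ i, 1 ≤ δ i)
    (hdec : toRat C * (sIm (A + B * F))⁻¹ * toRat B * toRat G =
      Matrix.diagonal fun i => ((RatFunc.X : RatFunc ℝ) ^ δ i)⁻¹) :
    (toRat C * (sIm A)⁻¹ * toRat B).rank = p := by
  set S := sIm A with hSdef
  set S' := sIm (A + B * F) with hS'def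
  have hS := isUnit_sIm A
  have hS' := isUnit_sIm (A + B * F)
  have hSsplit : S = S' + toRat B * toRat F := by
    have : toRat (A + B * F) = toRat A + toRat B * toRat F := by
      simp [toRat, Matrix.map_add, Matrix.map_mul]
    rw [hSdef, hS'def, sIm, sIm, this]
    abel
  have hSinv : S⁻¹ * S = 1 :=
    Matrix.nonsing_inv_mul S ((Matrix.isUnit_iff_isUnit_det S).mp hS)
  have hS'inv : S' * S'⁻¹ = 1 :=
    Matrix.mul_nonsing_inv S' ((Matrix.isUnit_iff_isUnit_det S').mp hS')
  have hkey : S'⁻¹ = S⁻¹ * (1 + toRat B * toRat F * S'⁻¹) := by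
    calc S'⁻¹ = S⁻¹ * (S * S'⁻¹) := by rw [← Matrix.mul_assoc, hSinv, Matrix.one_mul]
    _ = S⁻¹ * (1 + toRat B * toRat F * S'⁻¹) := by
        rw [hSsplit, Matrix.add_mul, hS'inv, Matrix.mul_assoc]
  have hfact : toRat C * S'⁻¹ * toRat B * toRat G =
      (toRat C * S⁻¹ * toRat B) *
        (toRat G + toRat F * S'⁻¹ * toRat B * toRat G) := by
    conv_lhs => rw [hkey]
    simp only [Matrix.mul_add, Matrix.add_mul, Matrix.mul_one, Matrix.mul_assoc]
  rw [hfact] at hdec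
  have hdrank : (Matrix.diagonal fun i => ((RatFunc.X : RatFunc ℝ) ^ δ i)⁻¹).rank = p := by
    rw [Matrix.rank_of_isUnit]
    · simp
    · rw [Matrix.isUnit_diagonal]
      refine IsUnit.of_mul_eq_one (fun i => (RatFunc.X : RatFunc ℝ) ^ δ i) ?_
      funext i
      exact inv_mul_cancel₀ (pow_ne_zero _ RatFunc.X_ne_zero)
  refine le_antisymm ?_ ?_
  · simpa using (toRat C * S⁻¹ * toRat B).rank_le_height
  · have h := Matrix.rank_mul_le_left (toRat C * S⁻¹ * toRat B)
      (toRat G + toRat F * S'⁻¹ * toRat B * toRat G)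
    rw [hdec, hdrank] at h
    exact h
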